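/- Let R be a prime ring and a, b in R. If a[b, x] lies in the center Z(R) for all x in R, then a = 0 or b is in Z(R). -/
import Mathlib


/-- The additive subgroup generated by commutators `a*b - b*a` with `a ∈ A`, `b ∈ B`. -/
def commSG (R : Type*) [NonUnitalRing R] (A B : Set R) : AddSubgroup R :=
  AddSubgroup.closure {x | ∃ a ∈ A, ∃ b ∈ B, x = a * b - b * a}

/-- The additive subgroup generated by products `a*b` with `a ∈ A`, `b ∈ B`. -/
def prodSG (R : Type*) [NonUnitalRing R] (A B : Set R) : AddSubgroup R :=
  AddSubgroup.closure {x | ∃ a ∈ A, ∃ b ∈ B, x = a * b}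

/-- `L` is a Lie ideal of `R`. -/
def IsLieIdeal (R : Type*) [NonUnitalRing R] (L : AddSubgroup R) : Prop :=
  ∀ a ∈ L, ∀ r : R, a * r - r * a ∈ L

/-- `sgPow R L n` is the additive subgroup `L^(n+1)` generated by products of `n+1`
elements of `L`. -/
def sgPow (R : Type*) [NonUnitalRing R] (L : AddSubgroup R) : ℕ → AddSubgroup R
  | 0 => L
  | n + 1 => prodSG R (sgPow R L n) L

/-- `R` is a semiprime ring. -/
def IsSemiprimeRing (R : Type*) [NonUnitalRing R] : Prop :=
  ∀ a : R, (∀ x : R, a * x * a = 0) → a = 0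

/-- `R` is a prime ring. -/
def IsPrimeRing (R : Type*) [NonUnitalRing R] : Prop :=
  ∀ a b : R, (∀ x : R, a * x * b = 0) → a = 0 ∨ b = 0

/-- in a prime ring, a[b,R] ⊆ Z(R) implies a = 0 or b ∈ Z(R). -/
theorem stmt2 (R : Type*) [NonUnitalRing R] (hR : IsPrimeRing R) (a b : R)
    (h : ∀ x y : R, (a * (b * x - x * b)) * y = y * (a * (b * x - x * b))) :
    a = 0 ∨ ∀ x : R, b * x = x * b := by

  by_cases hz : ∀ x : R, a * (b * x - x * b) = 0
  · by_cases ha : a = 0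
    · exact Or.inl ha
    right
    intro y
    have key : ∀ x : R, a * x * (b * y - y * b) = 0 := by
      intro x
      have h1 := hz (x * y)
      have h2 := hz x
      have e : a * x * (b * y - y * b)
          = a * (b * (x * y) - x * y * b) - a * (b * x - x * b) * y := by
        noncomm_ring
      rw [e, h1, h2, zero_mul, sub_zero]
    rcases hR a (b * y - y * b) key with h' | h'
    · exact absurd h' ha
    · exact sub_eq_zero.mp h'
  · push_neg at hz
    obtain ⟨x, hx⟩ := hz
    set z := a * (b * x - x * b) with hzdef
    right
    intro y
    -- z * b is central: z * b = a*(b*(x*b) - (x*b)*b)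
    have hzb : ∀ w : R, (z * b) * w = w * (z * b) := by
      intro w
      have e : z * b = a * (b * (x * b) - (x * b) * b) := by
        rw [hzdef]; noncomm_ring
      rw [e]
      exact h (x * b) w
    have step1 : z * (b * y - y * b) = 0 := by
      have e1 : z * b * y = y * (z * b) := hzb y
      have e2 : z * y = y * z := h x y
      have : z * y * b = z * b * y := by rw [e1, ← mul_assoc, ← e2]
      calc z * (b * y - y * b) = z * b * y - z * y * b := by noncomm_ring
        _ = 0 := by rw [this, sub_self]
    have key : ∀ w : R, z * w * (b * y - y * b) = 0 := by
      intro w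
      have e : z * w = w * z := h x w
      rw [e, mul_assoc, step1, mul_zero]
    rcases hR z (b * y - y * b) key with h' | h'
    · exact absurd h' hx
    · exact sub_eq_zero.mp h'
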